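/- The volume of G_3 = {y ∈ ℝ³ : y₁ > 0, |y|³ < 2y₁²} equals 16π/21, which is strictly less than the volume 4π/3 of the unit ball in ℝ³. -/

import Mathlib

open MeasureTheory Real Set

def T3 : Set (ℝ × (Fin 2 → ℝ)) :=
  {p | 0 < p.1 ∧ (p.1^2 + (p.2 0)^2 + (p.2 1)^2)^3 < 4 * p.1^4}

lemma T3_meas : MeasurableSet T3 := by
  have h1 : MeasurableSet {p : ℝ × (Fin 2 → ℝ) | 0 < p.1} :=
    measurableSet_lt measurable_const measurable_fst
  have h2 : MeasurableSet {p : ℝ × (Fin 2 → ℝ) |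
      (p.1^2 + (p.2 0)^2 + (p.2 1)^2)^3 < 4 * p.1^4} :=
    measurableSet_lt (by fun_prop) (by fun_prop)
  exact h1.inter h2

lemma slice_vol (c : ℝ) :
    volume {z : Fin 2 → ℝ | (z 0)^2 + (z 1)^2 < c} = ENNReal.ofReal (π * c) := by
  rcases le_or_gt c 0 with hc | hc
  · have h1 : {z : Fin 2 → ℝ | (z 0)^2 + (z 1)^2 < c} = ∅ := by
      ext z
      simp only [mem_setOf_eq, mem_empty_iff_false, iff_false, not_lt]
      nlinarith [sq_nonneg (z 0), sq_nonneg (z 1)]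
    rw [h1, measure_empty, eq_comm, ENNReal.ofReal_eq_zero]
    nlinarith [pi_pos]
  · have hmeas : MeasurableSet {z : Fin 2 → ℝ | (z 0)^2 + (z 1)^2 < c} := by
      apply measurableSet_lt _ measurable_const
      fun_prop
    rw [← (EuclideanSpace.volume_preserving_symm_measurableEquiv_toLp (Fin 2)).measure_preimage
      hmeas.nullMeasurableSet]
    have hpre : (MeasurableEquiv.toLp 2 (Fin 2 → ℝ)).symm ⁻¹'
        {z : Fin 2 → ℝ | (z 0)^2 + (z 1)^2 < c}
        = Metric.ball (0 : EuclideanSpace ℝ (Fin 2)) (Real.sqrt c) := by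
      rw [EuclideanSpace.ball_zero_eq _ (Real.sqrt_nonneg c), Real.sq_sqrt hc.le]
      ext y
      simp [Fin.sum_univ_two]
    rw [hpre, EuclideanSpace.volume_ball]
    have : Real.Gamma ((Fintype.card (Fin 2) : ℝ) / 2 + 1) = 1 := by
      norm_num [show (2:ℝ)/2+1 = 1+1 by norm_num, Real.Gamma_add_one, Real.Gamma_one]
    rw [this]
    simp only [Fintype.card_fin]
    rw [← ENNReal.ofReal_pow (Real.sqrt_nonneg c), Real.sq_sqrt hc.le,
      ← ENNReal.ofReal_mul hc.le]
    congr 1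
    rw [Real.sq_sqrt pi_pos.le]
    ring


lemma hg3 (t : ℝ) : ((4*t^4)^((1:ℝ)/3))^3 = 4*t^4 := by
  rw [← Real.rpow_natCast ((4*t^4)^((1:ℝ)/3)) 3, ← Real.rpow_mul (by positivity)]
  norm_num

lemma vol_T3 : volume T3 = ENNReal.ofReal (16 * π / 21) := by
  have key : ∀ t : ℝ, 0 < t → Prod.mk t ⁻¹' T3
      = {z : Fin 2 → ℝ | (z 0)^2 + (z 1)^2 < (4*t^4)^((1:ℝ)/3) - t^2} := by
    intro t ht
    ext z
    simp only [T3, mem_preimage, mem_setOf_eq, ht, true_and]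
    nth_rewrite 1 [show (4:ℝ)*t^4 = ((4*t^4)^((1:ℝ)/3))^3 from (hg3 t).symm]
    rw [pow_lt_pow_iff_left₀ (by positivity) (by positivity) (by norm_num)]
    constructor <;> intro <;> linarith
  have hpt : ∀ t : ℝ, volume (Prod.mk t ⁻¹' T3) = Set.indicator (Ioi 0)
      (fun t => ENNReal.ofReal (π * ((4*t^4)^((1:ℝ)/3) - t^2))) t := by
    intro t
    rcases le_or_gt t 0 with ht | ht
    · rw [indicator_of_notMem (by simpa using ht)]
      have he : Prod.mk t ⁻¹' T3 = ∅ := by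
        ext z
        simp only [T3, mem_preimage, mem_setOf_eq, mem_empty_iff_false, iff_false, not_and]
        intro h; exact absurd h (not_lt.2 ht)
      rw [he, measure_empty]
    · rw [indicator_of_mem (mem_Ioi.mpr ht), key t ht, slice_vol]
  rw [Measure.volume_eq_prod, Measure.prod_apply T3_meas]
  simp_rw [hpt]
  rw [lintegral_indicator measurableSet_Ioi,
    ← Ioc_union_Ioi_eq_Ioi (by norm_num : (0:ℝ) ≤ 2),
    lintegral_union measurableSet_Ioi (Ioc_disjoint_Ioi le_rfl)]
  have hzero : ∫⁻ t in Ioi (2:ℝ),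
      ENNReal.ofReal (π * ((4*t^4)^((1:ℝ)/3) - t^2)) = 0 := by
    rw [setLIntegral_congr_fun measurableSet_Ioi (fun t (ht : t ∈ Ioi 2) => ?_),
      lintegral_zero]
    have h2 : (2:ℝ) < t := ht
    have hle : (4*t^4)^((1:ℝ)/3) ≤ t^2 := by
      apply le_of_pow_le_pow_left₀ (by norm_num : 3 ≠ 0) (by positivity)
      rw [hg3]
      have h4 : (4:ℝ) ≤ t^2 := by nlinarith
      have ht4 : (0:ℝ) ≤ t^4 := by positivity
      nlinarith [mul_le_mul_of_nonneg_left h4 ht4]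
    exact ENNReal.ofReal_eq_zero.mpr (by nlinarith [pi_pos])
  rw [hzero, add_zero]
  have hFeq : ∫⁻ t in Ioc (0:ℝ) 2, ENNReal.ofReal (π * ((4*t^4)^((1:ℝ)/3) - t^2))
      = ∫⁻ t in Ioc (0:ℝ) 2,
        ENNReal.ofReal (π * (2^((2:ℝ)/3) * t^((4:ℝ)/3) - t^2)) := by
    apply setLIntegral_congr_fun measurableSet_Ioc (fun t ht => ?_)
    have h0 : (0:ℝ) ≤ t := ht.1.le
    rw [show (4:ℝ)*t^4 = 2^2 * t^4 by norm_num,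
      Real.mul_rpow (by positivity) (by positivity),
      ← Real.rpow_natCast 2 2, ← Real.rpow_natCast t 4,
      ← Real.rpow_mul (by norm_num), ← Real.rpow_mul h0]
    norm_num
  rw [hFeq]
  set F : ℝ → ℝ := fun t => π * (2^((2:ℝ)/3) * t^((4:ℝ)/3) - t^2) with hF
  have hint : IntegrableOn F (Ioc 0 2) := by
    have hc : ContinuousOn F (Icc 0 2) := by
      apply ContinuousOn.mul continuousOn_const
      apply ContinuousOn.sub
      · apply ContinuousOn.mul continuousOn_const
        intro t _
        exact (Real.continuousAt_rpow_const t _ (Or.inr (by norm_num))).continuousWithinAt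
      · fun_prop
    exact (hc.integrableOn_Icc).mono_set Ioc_subset_Icc_self
  have hnn : 0 ≤ᵐ[volume.restrict (Ioc (0:ℝ) 2)] F := by
    filter_upwards [ae_restrict_mem measurableSet_Ioc] with t ht
    have e1 : t^((2:ℝ)/3) * t^((4:ℝ)/3) = t^2 := by
      rw [← Real.rpow_add ht.1, show (2:ℝ)/3 + 4/3 = ((2:ℕ):ℝ) by norm_num,
        Real.rpow_natCast]
    have e2 : t^((2:ℝ)/3) ≤ 2^((2:ℝ)/3) :=
      Real.rpow_le_rpow ht.1.le ht.2 (by norm_num)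
    have e3 : (0:ℝ) ≤ t^((4:ℝ)/3) := Real.rpow_nonneg ht.1.le _
    have : t^2 ≤ 2^((2:ℝ)/3) * t^((4:ℝ)/3) := by nlinarith
    simp only [hF, Pi.zero_apply]
    nlinarith [pi_pos]
  rw [← ofReal_integral_eq_lintegral_ofReal hint hnn]
  congr 1
  rw [← intervalIntegral.integral_of_le (by norm_num : (0:ℝ) ≤ 2)]
  have hi1 : IntervalIntegrable (fun t : ℝ => (2:ℝ)^((2:ℝ)/3) * t^((4:ℝ)/3)) volume 0 2 := by
    apply IntervalIntegrable.const_mul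
    apply intervalIntegral.intervalIntegrable_rpow (Or.inl (by norm_num))
  have hi2 : IntervalIntegrable (fun t : ℝ => t^2) volume 0 2 :=
    (continuous_pow 2).intervalIntegrable 0 2
  have i1 : ∫ t in (0:ℝ)..2, t^((4:ℝ)/3) = 2^((7:ℝ)/3) / (7/3) := by
    rw [integral_rpow (Or.inl (by norm_num))]
    rw [Real.zero_rpow (by norm_num)]
    norm_num
  have i2 : ∫ t in (0:ℝ)..2, t^2 = 8/3 := by
    rw [integral_pow]
    norm_num
  have h8 : (2:ℝ)^((2:ℝ)/3) * 2^((7:ℝ)/3) = 8 := by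
    rw [← Real.rpow_add (by norm_num : (0:ℝ) < 2),
      show (2:ℝ)/3 + 7/3 = ((3:ℕ):ℝ) by norm_num, Real.rpow_natCast]
    norm_num
  rw [hF]
  rw [intervalIntegral.integral_const_mul, intervalIntegral.integral_sub hi1 hi2,
    intervalIntegral.integral_const_mul, i1, i2,
    show (2:ℝ)^((2:ℝ)/3) * (2^((7:ℝ)/3)/(7/3)) = ((2:ℝ)^((2:ℝ)/3) * 2^((7:ℝ)/3))/(7/3) by ring,
    h8]
  norm_num
  ring

lemma transfer : volume {y : EuclideanSpace ℝ (Fin 3) | 0 < y 0 ∧ ‖y‖ ^ 3 < 2 * (y 0) ^ 2}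
    = volume T3 := by
  have hmp := (volume_preserving_piFinSuccAbove (fun _ : Fin 3 => ℝ) 0).comp
    (EuclideanSpace.volume_preserving_symm_measurableEquiv_toLp (Fin 3))
  rw [← hmp.measure_preimage T3_meas.nullMeasurableSet]
  congr 1
  ext y
  have hn : ‖y‖^2 = (y 0)^2 + (y 1)^2 + (y 2)^2 := by
    rw [EuclideanSpace.norm_eq, Real.sq_sqrt (by positivity)]
    simp [Fin.sum_univ_three, sq_abs]
  have happ : ((MeasurableEquiv.piFinSuccAbove (fun _ : Fin 3 => ℝ) 0) ∘
      (MeasurableEquiv.toLp 2 (Fin 3 → ℝ)).symm) y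
      = (y 0, fun j : Fin 2 => y (Fin.succAbove 0 j)) := rfl
  simp only [mem_setOf_eq, mem_preimage, Function.comp_apply, happ, T3]
  show _ ↔ 0 < y 0 ∧ ((y 0)^2 + (y (Fin.succAbove 0 0))^2 + (y (Fin.succAbove 0 1))^2)^3
      < 4 * (y 0)^4
  have h0 : Fin.succAbove (0 : Fin 3) 0 = 1 := rfl
  have h1 : Fin.succAbove (0 : Fin 3) 1 = 2 := rfl
  rw [h0, h1]
  constructor
  · rintro ⟨ht, h⟩
    refine ⟨ht, ?_⟩
    rw [← hn, show (‖y‖^2)^3 = (‖y‖^3)^2 by ring]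
    calc (‖y‖^3)^2 < (2*(y 0)^2)^2 := by
          apply pow_lt_pow_left₀ h (by positivity)
          norm_num
      _ = 4 * (y 0)^4 := by ring
  · rintro ⟨ht, h⟩
    refine ⟨ht, ?_⟩
    rw [← hn, show (‖y‖^2)^3 = (‖y‖^3)^2 by ring] at h
    have := (pow_lt_pow_iff_left₀ (by positivity : (0:ℝ) ≤ ‖y‖^3)
      (by positivity : (0:ℝ) ≤ 2*(y 0)^2) (two_ne_zero)).mp
    apply this
    calc (‖y‖^3)^2 < 4 * (y 0)^4 := h
      _ = (2*(y 0)^2)^2 := by ring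

theorem stmt_3 :
    volume {y : EuclideanSpace ℝ (Fin 3) | 0 < y 0 ∧ ‖y‖ ^ 3 < 2 * (y 0) ^ 2} =
      ENNReal.ofReal (16 * π / 21) ∧ 16 * π / 21 < 4 * π / 3 := by
  refine ⟨?_, ?_⟩
  · rw [transfer, vol_T3]
  · nlinarith [pi_pos]
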